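/- arXiv:2406.17054 — 2 statements merged into one kernel-verified Lean document; each statement's English description precedes it below -/
import Mathlib

section
/- Let W be a nonempty measurable space, p > 0, b ∈ [1,2], λ > 0, and let G be an arbitrary real-valued function on the space M(W) of finite signed measures on W. Define G_λ(ν) = G(ν) + (λ/2)·‖ν‖_TV² for ν ∈ M(W), and for each Borel probability measure μ on ℝ × W with ∫ |r|^{pb} dμ < ∞ define F_{λ,b,p}(μ) = G(ĥᵖμ) + (λ/2)·( ∫ |r|^{pb} dμ )^{2/b}, where ĥᵖμ is the signed p-homogeneous projection of μ. If G_λ attains its minimum over M(W), then F_{λ,b,p} attains its minimum over the set of probability measures μ on ℝ × W with ∫ |r|^{pb} dμ < ∞, and the two minimum values are equal. -/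
open MeasureTheory
open scoped ENNReal

section Aux

variable {W : Type*} [MeasurableSpace W]

private lemma measurable_rsign : Measurable Real.sign := by
  unfold Real.sign
  exact Measurable.ite measurableSet_Iio measurable_const
    (Measurable.ite measurableSet_Ioi measurable_const measurable_const)

private lemma abs_sign_le (r : ℝ) : |Real.sign r| ≤ 1 := by
  rcases Real.sign_apply_eq r with h | h | h <;> simp [h]

private lemma h_meas (p : ℝ) :
    Measurable fun x : ℝ × W => Real.sign x.1 * |x.1| ^ p :=
  (measurable_rsign.comp measurable_fst).mul (by fun_prop)

private lemma h_abs_le (p : ℝ) (x : ℝ × W) :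
    |Real.sign x.1 * |x.1| ^ p| ≤ |x.1| ^ p := by
  rw [abs_mul]
  have h1 : abs (|x.1| ^ p) = |x.1| ^ p :=
    abs_of_nonneg (Real.rpow_nonneg (abs_nonneg _) p)
  rw [h1]
  exact mul_le_of_le_one_left (Real.rpow_nonneg (abs_nonneg _) p) (abs_sign_le _)

/-- integrability of `|x.1|^p` from integrability of `|x.1|^(p*b)` on a probability measure. -/
private lemma g_int {p b : ℝ} (hp : 0 < p) (hb : 1 ≤ b)
    {μ : Measure (ℝ × W)} [IsProbabilityMeasure μ]
    (hint : Integrable (fun x : ℝ × W => |x.1| ^ (p * b)) μ) :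
    Integrable (fun x : ℝ × W => |x.1| ^ p) μ := by
  have hmeas : Measurable fun x : ℝ × W => |x.1| ^ p := by fun_prop
  refine ((integrable_const (1 : ℝ)).add hint).mono hmeas.aestronglyMeasurable
    (Filter.Eventually.of_forall fun x => ?_)
  have h1 : (0:ℝ) ≤ |x.1| ^ p := Real.rpow_nonneg (abs_nonneg _) _
  have h2 : (0:ℝ) ≤ |x.1| ^ (p * b) := Real.rpow_nonneg (abs_nonneg _) _
  rw [Real.norm_of_nonneg h1]
  have : |x.1| ^ p ≤ 1 + |x.1| ^ (p * b) := by
    rcases le_or_gt |x.1| 1 with h | h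
    · have := Real.rpow_le_one (abs_nonneg x.1) h hp.le
      linarith
    · have := Real.rpow_le_rpow_of_exponent_le h.le
        (by nlinarith : p ≤ p * b)
      linarith
  calc |x.1| ^ p ≤ 1 + |x.1| ^ (p * b) := this
    _ ≤ ‖(1:ℝ) + |x.1| ^ (p * b)‖ := le_abs_self _

private lemma h_int {p b : ℝ} (hp : 0 < p) (hb : 1 ≤ b)
    {μ : Measure (ℝ × W)} [IsProbabilityMeasure μ]
    (hint : Integrable (fun x : ℝ × W => |x.1| ^ (p * b)) μ) :
    Integrable (fun x : ℝ × W => Real.sign x.1 * |x.1| ^ p) μ :=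
  (g_int hp hb hint).mono (h_meas p).aestronglyMeasurable
    (Filter.Eventually.of_forall fun x => by
      rw [Real.norm_eq_abs, Real.norm_eq_abs,
        abs_of_nonneg (Real.rpow_nonneg (abs_nonneg _) p)]
      exact h_abs_le p x)

private lemma tv_repr (ν : SignedMeasure W) :
    ∃ i : Set W, MeasurableSet i ∧
      (ν.totalVariation Set.univ).toReal = ν i - ν iᶜ := by
  obtain ⟨i, hi₁, hi₂, hi₃, hpos, hneg⟩ := ν.toJordanDecomposition_spec
  refine ⟨i, hi₁, ?_⟩
  rw [SignedMeasure.totalVariation, Measure.add_apply, hpos, hneg,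
    SignedMeasure.toMeasureOfZeroLE_apply _ hi₂ hi₁ MeasurableSet.univ,
    SignedMeasure.toMeasureOfLEZero_apply _ hi₃ hi₁.compl MeasurableSet.univ]
  rw [ENNReal.toReal_add ENNReal.coe_ne_top ENNReal.coe_ne_top, ENNReal.coe_toReal,
    ENNReal.coe_toReal]
  simp [sub_eq_add_neg]

/-- The total-variation bound `‖ν‖ ≤ ∫ |r|^p dμ`. -/
private lemma tv_le_integral {p b : ℝ} (hp : 0 < p) (hb : 1 ≤ b)
    {μ : Measure (ℝ × W)} [IsProbabilityMeasure μ] {ν : SignedMeasure W}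
    (hint : Integrable (fun x : ℝ × W => |x.1| ^ (p * b)) μ)
    (hν : ∀ A : Set W, MeasurableSet A →
      ν A = ∫ x in {x : ℝ × W | x.2 ∈ A}, Real.sign x.1 * |x.1| ^ p ∂μ) :
    (ν.totalVariation Set.univ).toReal ≤ ∫ x : ℝ × W, |x.1| ^ p ∂μ := by
  obtain ⟨i, hi, hrepr⟩ := tv_repr ν
  have hgi := g_int hp hb (μ := μ) hint
  have hhi := h_int hp hb (μ := μ) hint
  set S : Set (ℝ × W) := {x : ℝ × W | x.2 ∈ i} with hSdef
  have hS : MeasurableSet S := measurable_snd hi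
  have hcompl : {x : ℝ × W | x.2 ∈ iᶜ} = Sᶜ := rfl
  have h1 : ν i ≤ ∫ x in S, |x.1| ^ p ∂μ := by
    rw [hν i hi]
    refine setIntegral_mono hhi.integrableOn hgi.integrableOn fun x => ?_
    exact (le_abs_self _).trans (h_abs_le p x)
  have h2 : -ν iᶜ ≤ ∫ x in Sᶜ, |x.1| ^ p ∂μ := by
    rw [hν iᶜ hi.compl, hcompl, ← integral_neg]
    refine setIntegral_mono hhi.neg.integrableOn hgi.integrableOn fun x => ?_
    exact (neg_le_abs _).trans (h_abs_le p x)
  have := integral_add_compl hS hgi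
  linarith [h1, h2, this]

/-- Jensen: `(∫ f)^b ≤ ∫ f^b` for nonneg `f` and `b ≥ 1` on a probability space. -/
private lemma jensen_rpow {α : Type*} [MeasurableSpace α] {μ : Measure α}
    [IsProbabilityMeasure μ] {f : α → ℝ} (hf0 : ∀ x, 0 ≤ f x) {b : ℝ} (hb : 1 ≤ b)
    (hf : Integrable f μ) (hfb : Integrable (fun x => f x ^ b) μ) :
    (∫ x, f x ∂μ) ^ b ≤ ∫ x, f x ^ b ∂μ := by
  have hcont : ContinuousOn (fun x : ℝ => x ^ b) (Set.Ici 0) := fun x _ =>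
    (Real.continuousAt_rpow_const x b (Or.inr (by linarith))).continuousWithinAt
  exact (convexOn_rpow hb).map_integral_le hcont isClosed_Ici
    (Filter.Eventually.of_forall fun x => hf0 x) hf hfb

/-- The key inequality `‖ν‖² ≤ (∫ |r|^(pb) dμ)^(2/b)`. -/
private lemma sq_tv_le {p b : ℝ} (hp : 0 < p) (hb : 1 ≤ b)
    {μ : Measure (ℝ × W)} [IsProbabilityMeasure μ] {ν : SignedMeasure W}
    (hint : Integrable (fun x : ℝ × W => |x.1| ^ (p * b)) μ)
    (hν : ∀ A : Set W, MeasurableSet A →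
      ν A = ∫ x in {x : ℝ × W | x.2 ∈ A}, Real.sign x.1 * |x.1| ^ p ∂μ) :
    (ν.totalVariation Set.univ).toReal ^ 2
      ≤ (∫ x : ℝ × W, |x.1| ^ (p * b) ∂μ) ^ ((2:ℝ) / b) := by
  have hb0 : b ≠ 0 := by linarith
  have hrw : ∀ x : ℝ × W, |x.1| ^ (p * b) = (|x.1| ^ p) ^ b := fun x => by
    rw [← Real.rpow_mul (abs_nonneg _)]
  have hgi := g_int hp hb (μ := μ) hint
  set I₁ : ℝ := ∫ x : ℝ × W, |x.1| ^ p ∂μ with hI₁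
  set I₂ : ℝ := ∫ x : ℝ × W, |x.1| ^ (p * b) ∂μ with hI₂
  have hI₁0 : 0 ≤ I₁ :=
    integral_nonneg fun x => Real.rpow_nonneg (abs_nonneg _) _
  have hI₂0 : 0 ≤ I₂ :=
    integral_nonneg fun x => Real.rpow_nonneg (abs_nonneg _) _
  have hT0 : 0 ≤ (ν.totalVariation Set.univ).toReal := ENNReal.toReal_nonneg
  have hT1 : (ν.totalVariation Set.univ).toReal ≤ I₁ := tv_le_integral hp hb hint hν
  have hjensen : I₁ ^ b ≤ I₂ := by
    have h := jensen_rpow (f := fun x : ℝ × W => |x.1| ^ p)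
      (fun x => Real.rpow_nonneg (abs_nonneg _) _) hb hgi
      (by simpa only [← hrw] using hint)
    have h2 : ∫ x : ℝ × W, (|x.1| ^ p) ^ b ∂μ = I₂ :=
      integral_congr_ae (Filter.Eventually.of_forall fun x => (hrw x).symm)
    linarith
  calc (ν.totalVariation Set.univ).toReal ^ 2 ≤ I₁ ^ 2 :=
        pow_le_pow_left₀ hT0 hT1 2
    _ = (I₁ ^ b) ^ ((2:ℝ) / b) := by
        rw [← Real.rpow_mul hI₁0, mul_div_cancel₀ _ hb0]
        rw [show ((2:ℝ)) = ((2:ℕ):ℝ) by norm_num, Real.rpow_natCast]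
    _ ≤ I₂ ^ ((2:ℝ) / b) :=
        Real.rpow_le_rpow (Real.rpow_nonneg hI₁0 _) hjensen
          (by positivity)

end Aux
section Constr

variable {W : Type*} [MeasurableSpace W]

private lemma lift_integral (νp νn : Measure W) [IsFiniteMeasure νp] [IsFiniteMeasure νn]
    (c : ℝ≥0∞) (a : ℝ) (u : ℝ → ℝ) (hu : Measurable u) (S : Set W) (hS : MeasurableSet S) :
    ∫ x in {x : ℝ × W | x.2 ∈ S},
        u x.1 ∂(c • (Measure.map (fun w => (a, w)) νp + Measure.map (fun w => (-a, w)) νn))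
      = c.toReal * ((νp S).toReal * u a + (νn S).toReal * u (-a)) := by
  have hfa : Measurable fun w : W => ((a, w) : ℝ × W) := measurable_prodMk_left
  have hfn : Measurable fun w : W => ((-a, w) : ℝ × W) := measurable_prodMk_left
  have hS' : MeasurableSet {x : ℝ × W | x.2 ∈ S} := measurable_snd hS
  have hpre : (fun w : W => ((a, w) : ℝ × W)) ⁻¹' {x : ℝ × W | x.2 ∈ S} = S :=
    Set.ext fun w => Iff.rfl
  have hpre' : (fun w : W => ((-a, w) : ℝ × W)) ⁻¹' {x : ℝ × W | x.2 ∈ S} = S :=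
    Set.ext fun w => Iff.rfl
  have hint1 : Integrable (fun x : ℝ × W => u x.1)
      (Measure.map (fun w => (a, w)) (νp.restrict S)) :=
    (integrable_map_measure (hu.comp measurable_fst).aestronglyMeasurable
      hfa.aemeasurable).mpr (integrable_const (u a))
  have hint2 : Integrable (fun x : ℝ × W => u x.1)
      (Measure.map (fun w => (-a, w)) (νn.restrict S)) :=
    (integrable_map_measure (hu.comp measurable_fst).aestronglyMeasurable
      hfn.aemeasurable).mpr (integrable_const (u (-a)))
  rw [Measure.restrict_smul, Measure.restrict_add, integral_smul_measure,
    Measure.restrict_map hfa hS', Measure.restrict_map hfn hS', hpre, hpre',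
    integral_add_measure hint1 hint2,
    integral_map (f := fun x : ℝ × W => u x.1) hfa.aemeasurable
      (hu.comp measurable_fst).aestronglyMeasurable,
    integral_map (f := fun x : ℝ × W => u x.1) hfn.aemeasurable
      (hu.comp measurable_fst).aestronglyMeasurable]
  simp only [integral_const, Measure.real, Measure.restrict_apply_univ, smul_eq_mul]

private lemma lift_integrable (νp νn : Measure W) [IsFiniteMeasure νp] [IsFiniteMeasure νn]
    {c : ℝ≥0∞} (hc : c ≠ ⊤) (a : ℝ) (u : ℝ → ℝ) (hu : Measurable u) :
    Integrable (fun x : ℝ × W => u x.1)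
      (c • (Measure.map (fun w => (a, w)) νp + Measure.map (fun w => (-a, w)) νn)) := by
  refine Integrable.smul_measure (Integrable.add_measure ?_ ?_) hc
  · exact (integrable_map_measure (hu.comp measurable_fst).aestronglyMeasurable
      measurable_prodMk_left.aemeasurable).mpr (integrable_const (u a))
  · exact (integrable_map_measure (hu.comp measurable_fst).aestronglyMeasurable
      measurable_prodMk_left.aemeasurable).mpr (integrable_const (u (-a)))

end Constr

private lemma exists_lift {W : Type*} [MeasurableSpace W] [Nonempty W]
    {p b : ℝ} (hp : 0 < p) (hb1 : 1 ≤ b) (νstar : SignedMeasure W) :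
    ∃ μ₀ : Measure (ℝ × W), IsProbabilityMeasure μ₀ ∧
      Integrable (fun x : ℝ × W => |x.1| ^ (p * b)) μ₀ ∧
      (∀ A : Set W, MeasurableSet A →
        νstar A = ∫ x in {x : ℝ × W | x.2 ∈ A}, Real.sign x.1 * |x.1| ^ p ∂μ₀) ∧
      (∫ x : ℝ × W, |x.1| ^ (p * b) ∂μ₀) ^ ((2:ℝ) / b)
        = ((νstar.totalVariation Set.univ).toReal) ^ 2 := by
  have hb0 : b ≠ 0 := by linarith
  have hpb : p * b ≠ 0 := by positivity
  set m : ℝ := (νstar.totalVariation Set.univ).toReal with hm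
  haveI htvfin : IsFiniteMeasure νstar.totalVariation := by
    rw [SignedMeasure.totalVariation]; infer_instance
  rcases eq_or_ne m 0 with hm0 | hm0
  · -- degenerate case : νstar = 0
    set z : ℝ × W := (0, Classical.arbitrary W) with hz
    have hqmeas : Measurable fun x : ℝ × W => |x.1| ^ (p * b) := by fun_prop
    have hgmeas : Measurable fun x : ℝ × W => |x.1| ^ p := by fun_prop
    have hqint : Integrable (fun x : ℝ × W => |x.1| ^ (p * b)) (Measure.dirac z) := by
      refine ⟨hqmeas.aestronglyMeasurable, ?_⟩
      show (∫⁻ x, (‖|x.1| ^ (p * b)‖₊ : ℝ≥0∞) ∂Measure.dirac z) < ⊤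
      rw [lintegral_dirac' z hqmeas.nnnorm.coe_nnreal_ennreal]
      exact ENNReal.coe_lt_top
    have hgint : Integrable (fun x : ℝ × W => |x.1| ^ p) (Measure.dirac z) := by
      refine ⟨hgmeas.aestronglyMeasurable, ?_⟩
      show (∫⁻ x, (‖|x.1| ^ p‖₊ : ℝ≥0∞) ∂Measure.dirac z) < ⊤
      rw [lintegral_dirac' z hgmeas.nnnorm.coe_nnreal_ennreal]
      exact ENNReal.coe_lt_top
    have hhint : Integrable (fun x : ℝ × W => Real.sign x.1 * |x.1| ^ p) (Measure.dirac z) :=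
      hgint.mono (h_meas p).aestronglyMeasurable
        (Filter.Eventually.of_forall fun x => by
          rw [Real.norm_eq_abs, Real.norm_eq_abs,
            abs_of_nonneg (Real.rpow_nonneg (abs_nonneg _) p)]
          exact h_abs_le p x)
    have hgzero : ∫ x : ℝ × W, |x.1| ^ p ∂Measure.dirac z = 0 := by
      rw [integral_dirac' _ z hgmeas.stronglyMeasurable]
      simp [hz, Real.zero_rpow hp.ne']
    have hνzero : ∀ A : Set W, MeasurableSet A → νstar A = 0 := by
      intro A hA
      have htv : νstar.totalVariation Set.univ = 0 := by
        have hne := measure_ne_top νstar.totalVariation Set.univ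
        rcases (ENNReal.toReal_eq_zero_iff _).mp hm0 with h | h
        · exact h
        · exact absurd h hne
      exact SignedMeasure.null_of_totalVariation_zero _
        (measure_mono_null (Set.subset_univ A) htv)
    refine ⟨Measure.dirac z, inferInstance, hqint, ?_, ?_⟩
    · intro A hA
      rw [hνzero A hA]
      have habs : |∫ x in {x : ℝ × W | x.2 ∈ A}, Real.sign x.1 * |x.1| ^ p ∂Measure.dirac z|
          ≤ ∫ x : ℝ × W, |x.1| ^ p ∂Measure.dirac z := by
        have hn := norm_integral_le_integral_norm
          (μ := (Measure.dirac z).restrict {x : ℝ × W | x.2 ∈ A})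
          (fun x : ℝ × W => Real.sign x.1 * |x.1| ^ p)
        simp only [Real.norm_eq_abs] at hn
        refine hn.trans ?_
        have h1 : ∫ x in {x : ℝ × W | x.2 ∈ A}, |Real.sign x.1 * |x.1| ^ p| ∂Measure.dirac z
            ≤ ∫ x in {x : ℝ × W | x.2 ∈ A}, |x.1| ^ p ∂Measure.dirac z :=
          setIntegral_mono hhint.abs.integrableOn hgint.integrableOn
            fun x => h_abs_le p x
        have h2 : ∫ x in {x : ℝ × W | x.2 ∈ A}, |x.1| ^ p ∂Measure.dirac z
            ≤ ∫ x : ℝ × W, |x.1| ^ p ∂Measure.dirac z :=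
          setIntegral_le_integral hgint
            (Filter.Eventually.of_forall fun x => Real.rpow_nonneg (abs_nonneg _) _)
        linarith
      rw [hgzero] at habs
      have := abs_nonneg (∫ x in {x : ℝ × W | x.2 ∈ A},
        Real.sign x.1 * |x.1| ^ p ∂Measure.dirac z)
      have h0 : |∫ x in {x : ℝ × W | x.2 ∈ A},
          Real.sign x.1 * |x.1| ^ p ∂Measure.dirac z| = 0 := le_antisymm habs this
      rw [abs_eq_zero] at h0
      exact h0.symm
    · rw [integral_dirac' _ z hqmeas.stronglyMeasurable]
      simp only [hz]
      rw [abs_zero, Real.zero_rpow hpb, Real.zero_rpow (div_ne_zero two_ne_zero hb0), hm0]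
      norm_num
  · -- main case : m > 0
    have hMtop : νstar.totalVariation Set.univ ≠ ⊤ := measure_ne_top _ _
    have hM0 : νstar.totalVariation Set.univ ≠ 0 := by
      intro h; exact hm0 (by rw [hm, h, ENNReal.toReal_zero])
    have hmpos : 0 < m := ENNReal.toReal_pos hM0 hMtop
    set J := νstar.toJordanDecomposition with hJ
    have hMsum : νstar.totalVariation Set.univ = J.posPart Set.univ + J.negPart Set.univ := by
      rw [SignedMeasure.totalVariation, Measure.add_apply]
    set a : ℝ := m ^ ((1:ℝ)/p) with ha
    have hapos : 0 < a := Real.rpow_pos_of_pos hmpos _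
    have hap : a ^ p = m := by
      rw [ha, ← Real.rpow_mul hmpos.le, one_div_mul_cancel hp.ne', Real.rpow_one]
    have hapb : a ^ (p * b) = m ^ b := by
      rw [ha, ← Real.rpow_mul hmpos.le]
      congr 1
      field_simp
    set μ₀ : Measure (ℝ × W) := (νstar.totalVariation Set.univ)⁻¹ •
      (Measure.map (fun w => (a, w)) J.posPart + Measure.map (fun w => (-a, w)) J.negPart)
      with hμ₀
    have hprob : IsProbabilityMeasure μ₀ := by
      constructor
      rw [hμ₀, Measure.smul_apply, Measure.add_apply,
        Measure.map_apply measurable_prodMk_left MeasurableSet.univ,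
        Measure.map_apply measurable_prodMk_left MeasurableSet.univ]
      simp only [Set.preimage_univ, smul_eq_mul]
      rw [← hMsum]
      exact ENNReal.inv_mul_cancel hM0 hMtop
    have hctop : (νstar.totalVariation Set.univ)⁻¹ ≠ ⊤ := by
      simp [ENNReal.inv_ne_top, hM0]
    have hctoReal : ((νstar.totalVariation Set.univ)⁻¹).toReal = m⁻¹ := by
      rw [ENNReal.toReal_inv, ← hm]
    have hsumReal : (J.posPart Set.univ).toReal + (J.negPart Set.univ).toReal = m := by
      rw [hm, hMsum, ENNReal.toReal_add (measure_ne_top _ _) (measure_ne_top _ _)]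
    refine ⟨μ₀, hprob, ?_, ?_, ?_⟩
    · rw [hμ₀]
      exact lift_integrable _ _ hctop a (fun r => |r| ^ (p * b)) (by fun_prop)
    · intro A hA
      have happly : νstar A = (J.posPart A).toReal - (J.negPart A).toReal := by
        conv_lhs => rw [← νstar.toSignedMeasure_toJordanDecomposition]
        rw [← hJ, JordanDecomposition.toSignedMeasure, VectorMeasure.sub_apply,
          Measure.toSignedMeasure_apply_measurable hA,
          Measure.toSignedMeasure_apply_measurable hA]
        rfl
      have hcalc := lift_integral J.posPart J.negPart (νstar.totalVariation Set.univ)⁻¹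
        a (fun r => Real.sign r * |r| ^ p)
        (measurable_rsign.mul (by fun_prop)) A hA
      rw [hμ₀, hcalc, happly, hctoReal]
      simp only [Real.sign_of_pos hapos, Real.sign_of_neg (neg_lt_zero.mpr hapos),
        abs_neg, abs_of_pos hapos, hap]
      field_simp
      ring
    · have huniv : {x : ℝ × W | x.2 ∈ (Set.univ : Set W)} = Set.univ := by
        ext x; simp
      have hcalc := lift_integral J.posPart J.negPart (νstar.totalVariation Set.univ)⁻¹
        a (fun r => |r| ^ (p * b)) (by fun_prop) Set.univ MeasurableSet.univ
      rw [huniv, Measure.restrict_univ] at hcalc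
      rw [hμ₀, hcalc, hctoReal]
      simp only [abs_neg, abs_of_pos hapos, hapb]
      have hinner : m⁻¹ * ((J.posPart Set.univ).toReal * m ^ b
          + (J.negPart Set.univ).toReal * m ^ b) = m ^ b := by
        field_simp
        exact hsumReal
      rw [hinner, ← Real.rpow_natCast m 2, ← Real.rpow_mul hmpos.le]
      congr 1
      push_cast
      field_simp

/-- value-equality part of Proposition F.2 / Proposition 3.1.
If `G_λ(ν) = G(ν) + (λ/2)‖ν‖_TV²` attains its minimum over finite signed measures on `W`,
then the lifted objective `F_{λ,b,p}(μ) = G(ĥᵖμ) + (λ/2)(∫|r|^(pb) dμ)^(2/b)` attains its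
minimum over probability measures `μ` on `ℝ × W` with `∫|r|^(pb) dμ < ∞`, and the two minimum
values are equal.  The signed `p`-homogeneous projection `ĥᵖμ` is encoded by the predicate
that `ν A = ∫_{ℝ×A} sign r · |r|^p dμ` for every measurable `A`. -/
theorem stmt_2 {W : Type*} [MeasurableSpace W] [Nonempty W]
    (p b lam : ℝ) (hp : 0 < p) (hb : b ∈ Set.Icc (1 : ℝ) 2) (hlam : 0 < lam)
    (G : SignedMeasure W → ℝ)
    (νstar : SignedMeasure W)
    (hmin : ∀ ν : SignedMeasure W,
      G νstar + lam / 2 * ((νstar.totalVariation Set.univ).toReal) ^ 2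
        ≤ G ν + lam / 2 * ((ν.totalVariation Set.univ).toReal) ^ 2) :
    ∃ (μ₀ : Measure (ℝ × W)) (ν₀ : SignedMeasure W),
      IsProbabilityMeasure μ₀ ∧
      Integrable (fun x : ℝ × W => |x.1| ^ (p * b)) μ₀ ∧
      (∀ A : Set W, MeasurableSet A →
        ν₀ A = ∫ x in {x : ℝ × W | x.2 ∈ A}, Real.sign x.1 * |x.1| ^ p ∂μ₀) ∧
      (∀ (μ : Measure (ℝ × W)) (ν : SignedMeasure W),
        IsProbabilityMeasure μ →
        Integrable (fun x : ℝ × W => |x.1| ^ (p * b)) μ →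
        (∀ A : Set W, MeasurableSet A →
          ν A = ∫ x in {x : ℝ × W | x.2 ∈ A}, Real.sign x.1 * |x.1| ^ p ∂μ) →
        G ν₀ + lam / 2 * (∫ x : ℝ × W, |x.1| ^ (p * b) ∂μ₀) ^ ((2 : ℝ) / b)
          ≤ G ν + lam / 2 * (∫ x : ℝ × W, |x.1| ^ (p * b) ∂μ) ^ ((2 : ℝ) / b)) ∧
      G ν₀ + lam / 2 * (∫ x : ℝ × W, |x.1| ^ (p * b) ∂μ₀) ^ ((2 : ℝ) / b)
        = G νstar + lam / 2 * ((νstar.totalVariation Set.univ).toReal) ^ 2 := by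
  obtain ⟨hb1, hb2⟩ := hb
  obtain ⟨μ₀, hprob₀, hint₀, hproj₀, hval₀⟩ := exists_lift hp hb1 νstar
  refine ⟨μ₀, νstar, hprob₀, hint₀, hproj₀, ?_, by rw [hval₀]⟩
  intro μ ν hμprob hμint hνproj
  haveI := hμprob
  rw [hval₀]
  have h1 := hmin ν
  have h2 := sq_tv_le hp hb1 (μ := μ) hμint hνproj
  have h3 := mul_le_mul_of_nonneg_left h2 (by positivity : (0:ℝ) ≤ lam / 2)
  linarith
end

section
/- Let W be a measurable space, λ > 0, and G : M(W) → ℝ a function on the space of finite signed measures on W such that G_λ(ν) := G(ν) + (λ/2)·‖ν‖_TV² is bounded below. For η ∈ P(W) define J_λ(η) = inf { G(ν) + (λ/2) ∫ (dν/dη)² dη : ν ∈ M(W), |ν| ≪ η, ∫ (dν/dη)² dη < ∞ }. If ν* ≠ 0 minimizes G_λ over M(W), then η* = ‖ν*‖_TV^{-1}·|ν*| satisfies J_λ(η*) = G_λ(ν*) and J_λ(η*) ≤ J_λ(η) for every η ∈ P(W); i.e. η* is a minimizer of J_λ. -/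
open MeasureTheory

/-- The total variation norm of a finite signed measure. -/
noncomputable def tvNorm {W : Type*} [MeasurableSpace W] (ν : SignedMeasure W) : ℝ :=
  (ν.totalVariation Set.univ).toReal

/-- The bilevel objective
`J_λ(η) = inf { G(ν) + (λ/2) ∫ (dν/dη)² dη : ν ∈ M(W), |ν| ≪ η, ∫ (dν/dη)² dη < ∞ }`. -/
noncomputable def Jlam {W : Type*} [MeasurableSpace W]
    (lam : ℝ) (G : SignedMeasure W → ℝ) (η : Measure W) : ℝ :=
  sInf { z : ℝ | ∃ ν : SignedMeasure W,
    ν.totalVariation ≪ η ∧ Integrable (fun w => ν.rnDeriv η w ^ 2) η ∧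
    z = G ν + lam / 2 * ∫ w, ν.rnDeriv η w ^ 2 ∂η }

instance totalVariation_isFiniteMeasure {W : Type*} [MeasurableSpace W]
    (ν : SignedMeasure W) : IsFiniteMeasure ν.totalVariation :=
  inferInstanceAs (IsFiniteMeasure
    (ν.toJordanDecomposition.posPart + ν.toJordanDecomposition.negPart))

lemma abs_rnDeriv_ae {W : Type*} [MeasurableSpace W] (ν : SignedMeasure W) (η : Measure W)
    [SigmaFinite η] (h : ν.totalVariation ≪ η) :
    (fun w => |ν.rnDeriv η w|) =ᵐ[η] fun w => (ν.totalVariation.rnDeriv η w).toReal := by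
  set p := ν.toJordanDecomposition.posPart with hp_def
  set n := ν.toJordanDecomposition.negPart with hn_def
  have hpn := (SignedMeasure.totalVariation_absolutelyContinuous_iff ν η).mp h
  obtain ⟨S, hSm, hS1, hS2⟩ := ν.toJordanDecomposition.mutuallySingular
  have h1 : p.rnDeriv η =ᵐ[η.restrict S] 0 := by
    rw [← lintegral_eq_zero_iff (Measure.measurable_rnDeriv _ _)]
    rw [Measure.setLIntegral_rnDeriv' hpn.1 hSm]
    exact hS1
  have h2 : n.rnDeriv η =ᵐ[η.restrict Sᶜ] 0 := by
    rw [← lintegral_eq_zero_iff (Measure.measurable_rnDeriv _ _)]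
    rw [Measure.setLIntegral_rnDeriv' hpn.2 hSm.compl]
    exact hS2
  have h1' := (ae_restrict_iff' hSm).mp h1
  have h2' := (ae_restrict_iff' hSm.compl).mp h2
  have hadd : ν.totalVariation.rnDeriv η =ᵐ[η] p.rnDeriv η + n.rnDeriv η :=
    Measure.rnDeriv_add' p n η
  filter_upwards [h1', h2', hadd, Measure.rnDeriv_lt_top p η, Measure.rnDeriv_lt_top n η]
    with w hw1 hw2 hw3 hwp hwn
  have hrn : ν.rnDeriv η w = (p.rnDeriv η w).toReal - (n.rnDeriv η w).toReal := rfl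
  rw [hrn, hw3, Pi.add_apply, ENNReal.toReal_add hwp.ne hwn.ne]
  by_cases hw : w ∈ S
  · rw [hw1 hw]
    simp [abs_of_nonneg ENNReal.toReal_nonneg]
  · rw [hw2 hw]
    simp [abs_of_nonneg ENNReal.toReal_nonneg]

lemma tvNorm_eq_integral {W : Type*} [MeasurableSpace W] (ν : SignedMeasure W) (η : Measure W)
    [SigmaFinite η] (h : ν.totalVariation ≪ η) :
    tvNorm ν = ∫ w, |ν.rnDeriv η w| ∂η := by
  rw [integral_congr_ae (abs_rnDeriv_ae ν η h),
    MeasureTheory.integral_toReal (Measure.measurable_rnDeriv _ _).aemeasurable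
      (Measure.rnDeriv_lt_top _ _),
    Measure.lintegral_rnDeriv h]
  rfl

lemma sq_integral_abs_le {W : Type*} [MeasurableSpace W] (η : Measure W)
    [IsProbabilityMeasure η] {f : W → ℝ} (hm : Measurable f)
    (hi : Integrable (fun w => f w ^ 2) η) :
    (∫ w, |f w| ∂η) ^ 2 ≤ ∫ w, f w ^ 2 ∂η := by
  have hX : MemLp (fun w => |f w|) 2 η := by
    rw [memLp_two_iff_integrable_sq hm.abs.aestronglyMeasurable]
    simpa [sq_abs] using hi
  have h := ProbabilityTheory.variance_nonneg (fun w => |f w|) η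
  rw [ProbabilityTheory.variance_eq_sub hX] at h
  simp only [Pi.pow_apply, sq_abs] at h
  linarith

lemma Jlam_lower_bound {W : Type*} [MeasurableSpace W] {lam : ℝ} (hlam : 0 < lam)
    (G : SignedMeasure W → ℝ) (νstar : SignedMeasure W)
    (hmin : ∀ ν : SignedMeasure W,
      G νstar + lam / 2 * tvNorm νstar ^ 2 ≤ G ν + lam / 2 * tvNorm ν ^ 2)
    (η : Measure W) [IsProbabilityMeasure η] :
    ∀ z ∈ { z : ℝ | ∃ ν : SignedMeasure W,
        ν.totalVariation ≪ η ∧ Integrable (fun w => ν.rnDeriv η w ^ 2) η ∧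
        z = G ν + lam / 2 * ∫ w, ν.rnDeriv η w ^ 2 ∂η },
      G νstar + lam / 2 * tvNorm νstar ^ 2 ≤ z := by
  rintro z ⟨ν, hac, hint, rfl⟩
  have h1 : tvNorm ν = ∫ w, |ν.rnDeriv η w| ∂η := tvNorm_eq_integral ν η hac
  have h2 := sq_integral_abs_le η (ν.measurable_rnDeriv η) hint
  have h3 := hmin ν
  nlinarith [h1 ▸ h2]

/-- forward direction of the minimizer characterization in Proposition 3.3.
If `G_λ` is bounded below and `ν* ≠ 0` minimizes `G_λ`, then `η* = ‖ν*‖_TV⁻¹ • |ν*|`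
satisfies `J_λ(η*) = G_λ(ν*)` and minimizes `J_λ` over probability measures. -/
theorem stmt_8 {W : Type*} [MeasurableSpace W]
    (lam : ℝ) (hlam : 0 < lam) (G : SignedMeasure W → ℝ)
    (c : ℝ)
    (hbdd : ∀ ν : SignedMeasure W, c ≤ G ν + lam / 2 * tvNorm ν ^ 2)
    (νstar : SignedMeasure W) (hne : νstar ≠ 0)
    (hmin : ∀ ν : SignedMeasure W,
      G νstar + lam / 2 * tvNorm νstar ^ 2 ≤ G ν + lam / 2 * tvNorm ν ^ 2)
    (ηstar : Measure W)
    (hη : ηstar = (νstar.totalVariation Set.univ)⁻¹ • νstar.totalVariation) :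
    Jlam lam G ηstar = G νstar + lam / 2 * tvNorm νstar ^ 2 ∧
    ∀ η : Measure W, IsProbabilityMeasure η → Jlam lam G ηstar ≤ Jlam lam G η := by
  set t := νstar.totalVariation Set.univ with ht_def
  have htop : t ≠ ⊤ := measure_ne_top _ _
  have ht0 : t ≠ 0 := by
    intro h
    apply hne
    have h0 : νstar.totalVariation = 0 := Measure.measure_univ_eq_zero.mp h
    ext A hA
    rw [VectorMeasure.zero_apply]
    exact νstar.null_of_totalVariation_zero (by rw [h0]; rfl)
  haveI hprob : IsProbabilityMeasure ηstar := by
    constructor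
    rw [hη]
    simp only [Measure.smul_apply, smul_eq_mul]
    exact ENNReal.inv_mul_cancel ht0 htop
  have hacstar : νstar.totalVariation ≪ ηstar := by
    intro A hA
    rw [hη] at hA
    simp only [Measure.smul_apply, smul_eq_mul] at hA
    rcases mul_eq_zero.mp hA with h | h
    · exact absurd h (ENNReal.inv_ne_zero.mpr htop)
    · exact h
  -- the Radon–Nikodym derivative of |ν*| w.r.t. η* is the constant t
  have hconst : νstar.totalVariation.rnDeriv ηstar =ᵐ[ηstar] fun _ => t := by
    have hsm : ηstar ≪ νstar.totalVariation := by
      intro A hA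
      rw [hη]
      simp [Measure.smul_apply, hA]
    have h := Measure.rnDeriv_smul_right_of_ne_top νstar.totalVariation νstar.totalVariation
      (r := t⁻¹) (ENNReal.inv_ne_zero.mpr htop) (ENNReal.inv_ne_top.mpr ht0)
    have hsm' : (t⁻¹ • νstar.totalVariation) ≪ νstar.totalVariation := hη ▸ hsm
    have h2 := hsm'.ae_eq h
    have h3 := hsm'.ae_eq (Measure.rnDeriv_self νstar.totalVariation)
    rw [hη]
    filter_upwards [h2, h3] with w hw1 hw2
    rw [hw1, Pi.smul_apply, hw2, smul_eq_mul, mul_one, inv_inv]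
  have habs : (fun w => |νstar.rnDeriv ηstar w|) =ᵐ[ηstar] fun _ => t.toReal := by
    filter_upwards [abs_rnDeriv_ae νstar ηstar hacstar, hconst] with w hw1 hw2
    rw [hw1, hw2]
  have hsq : (fun w => νstar.rnDeriv ηstar w ^ 2) =ᵐ[ηstar] fun _ => t.toReal ^ 2 := by
    filter_upwards [habs] with w hw
    rw [← sq_abs, hw]
  have hint : Integrable (fun w => νstar.rnDeriv ηstar w ^ 2) ηstar :=
    (integrable_const (t.toReal ^ 2)).congr hsq.symm
  have hval : ∫ w, νstar.rnDeriv ηstar w ^ 2 ∂ηstar = t.toReal ^ 2 := by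
    rw [integral_congr_ae hsq, integral_const]
    simp
  have htv : tvNorm νstar = t.toReal := rfl
  have hmem : G νstar + lam / 2 * tvNorm νstar ^ 2 ∈ { z : ℝ | ∃ ν : SignedMeasure W,
      ν.totalVariation ≪ ηstar ∧ Integrable (fun w => ν.rnDeriv ηstar w ^ 2) ηstar ∧
      z = G ν + lam / 2 * ∫ w, ν.rnDeriv ηstar w ^ 2 ∂ηstar } :=
    ⟨νstar, hacstar, hint, by rw [hval, htv]⟩
  have hlb := Jlam_lower_bound hlam G νstar hmin ηstar
  have hJstar : Jlam lam G ηstar = G νstar + lam / 2 * tvNorm νstar ^ 2 := by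
    rw [Jlam]
    exact le_antisymm (csInf_le ⟨_, hlb⟩ hmem) (le_csInf ⟨_, hmem⟩ hlb)
  refine ⟨hJstar, fun η hηp => ?_⟩
  haveI := hηp
  have hzero : SignedMeasure.rnDeriv (0 : SignedMeasure W) η = fun _ => 0 := by
    funext w
    simp [SignedMeasure.rnDeriv, SignedMeasure.toJordanDecomposition_zero,
      JordanDecomposition.zero_posPart, JordanDecomposition.zero_negPart]
  have hne' : { z : ℝ | ∃ ν : SignedMeasure W,
      ν.totalVariation ≪ η ∧ Integrable (fun w => ν.rnDeriv η w ^ 2) η ∧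
      z = G ν + lam / 2 * ∫ w, ν.rnDeriv η w ^ 2 ∂η }.Nonempty := by
    refine ⟨G 0 + lam / 2 * ∫ w, (0 : SignedMeasure W).rnDeriv η w ^ 2 ∂η, 0, ?_, ?_, rfl⟩
    · intro A hA
      rw [SignedMeasure.totalVariation_zero]
      rfl
    · rw [hzero]
      exact (integrable_const (0 : ℝ) (μ := η)).congr (by simp)
  rw [hJstar, Jlam]
  exact le_csInf hne' (Jlam_lower_bound hlam G νstar hmin η)
end
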